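/- For all natural numbers n ≥ 1 and r with 1 ≤ r ≤ n, ∫₀¹ (−log(1 − r/(n+1)) + log(1 − x))² · x^{r−1}(1 − x)^{n−r} / B(r, n+1−r) dx = ∑_{k=n+1−r}^{n} 1/k² + ( log(1 − r/(n+1)) + H_n − H_{n−r} )², where B denotes the Beta function and H_m := ∑_{k=1}^{m} 1/k is the m-th harmonic number (H_0 := 0). -/

import Mathlib

/-- `harmonicR m = H_m = ∑_{k=1}^m 1/k`, with `H_0 = 0`. -/
noncomputable def harmonicR (m : ℕ) : ℝ := ∑ k ∈ Finset.range m, (1 : ℝ) / (k + 1)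

/-- The Beta function at natural arguments: `B(a, b) = ∫₀¹ t^(a−1) (1−t)^(b−1) dt`. -/
noncomputable def betaFn (a b : ℕ) : ℝ := ∫ t in (0 : ℝ)..1, t ^ (a - 1) * (1 - t) ^ (b - 1)

open Real Finset MeasureTheory intervalIntegral

noncomputable def Tfac (a b : ℕ) : ℝ := (a.factorial * b.factorial : ℝ) / (a + b + 1).factorial

noncomputable def Gsum (a b : ℕ) : ℝ := ∑ k ∈ Finset.range (a+1), (1:ℝ) / ((b:ℝ) + 1 + k) ^ 2

lemma neg_log_le_rpow {p x : ℝ} (hp : 0 < p) (hx : 0 < x) :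
    -Real.log x ≤ x ^ (-p) / p := by
  have h1 : Real.log (x ^ (-p)) ≤ x ^ (-p) - 1 :=
    Real.log_le_sub_one_of_pos (Real.rpow_pos_of_pos hx _)
  rw [Real.log_rpow hx] at h1
  have h2 : (0:ℝ) < x ^ (-p) := Real.rpow_pos_of_pos hx _
  rw [le_div_iff₀ hp]
  nlinarith

lemma ii_log_pow1 : IntervalIntegrable (fun x => Real.log x) volume 0 1 := by
  have hg : IntervalIntegrable (fun x : ℝ => 2 * x ^ (-(1:ℝ)/2)) volume 0 1 :=
    (intervalIntegrable_rpow' (by norm_num)).const_mul 2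
  rw [intervalIntegrable_iff_integrableOn_Ioc_of_le zero_le_one] at hg ⊢
  refine hg.integrable.mono Real.measurable_log.aestronglyMeasurable.restrict ?_
  rw [ae_restrict_iff' measurableSet_Ioc]
  filter_upwards with x; intro hx
  obtain ⟨hx0, hx1⟩ := hx
  have h1 : -Real.log x ≤ x ^ (-(1/2:ℝ)) / (1/2) := neg_log_le_rpow (by norm_num) hx0
  have h2 : (0:ℝ) < x ^ (-(1:ℝ)/2) := Real.rpow_pos_of_pos hx0 _
  have h3 : Real.log x ≤ 0 := Real.log_nonpos (le_of_lt hx0) hx1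
  rw [Real.norm_eq_abs, Real.norm_eq_abs, abs_of_nonpos h3, abs_of_nonneg (by positivity)]
  have : (-(1/2:ℝ)) = (-(1:ℝ)/2) := by norm_num
  rw [this] at h1; linarith

lemma ii_log_pow2 : IntervalIntegrable (fun x => Real.log x ^ 2) volume 0 1 := by
  have hg : IntervalIntegrable (fun x : ℝ => 16 * x ^ (-(1:ℝ)/2)) volume 0 1 :=
    (intervalIntegrable_rpow' (by norm_num)).const_mul 16
  rw [intervalIntegrable_iff_integrableOn_Ioc_of_le zero_le_one] at hg ⊢
  refine hg.integrable.mono ((Real.measurable_log.pow_const 2).aestronglyMeasurable.restrict) ?_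
  rw [ae_restrict_iff' measurableSet_Ioc]
  filter_upwards with x; intro hx
  obtain ⟨hx0, hx1⟩ := hx
  have h1 : -Real.log x ≤ x ^ (-(1/4:ℝ)) / (1/4) := neg_log_le_rpow (by norm_num) hx0
  have h2 : (0:ℝ) < x ^ (-(1/4:ℝ)) := Real.rpow_pos_of_pos hx0 _
  have h3 : Real.log x ≤ 0 := Real.log_nonpos (le_of_lt hx0) hx1
  have h4 : Real.log x ^ 2 ≤ (x ^ (-(1/4:ℝ)) / (1/4)) ^ 2 := by nlinarith
  have h5 : (x ^ (-(1/4:ℝ))) ^ 2 = x ^ (-(1:ℝ)/2) := by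
    rw [← Real.rpow_natCast (x ^ (-(1/4:ℝ))) 2, ← Real.rpow_mul (le_of_lt hx0)]
    norm_num
  rw [Real.norm_eq_abs, Real.norm_eq_abs, abs_of_nonneg (by positivity),
    abs_of_nonneg (by positivity)]
  calc Real.log x ^ 2 ≤ (x ^ (-(1/4:ℝ)) / (1/4)) ^ 2 := h4
    _ = 16 * (x ^ (-(1/4:ℝ))) ^ 2 := by ring
    _ = 16 * x ^ (-(1:ℝ)/2) := by rw [h5]

lemma ii_pow_mul_log (m k : ℕ) (hk : k ≤ 2) :
    IntervalIntegrable (fun x => x ^ m * Real.log x ^ k) volume 0 1 := by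
  interval_cases k
  · simpa using (continuous_pow m).intervalIntegrable 0 1
  · simpa using ii_log_pow1.continuousOn_mul (continuous_pow m).continuousOn
  · exact ii_log_pow2.continuousOn_mul (continuous_pow m).continuousOn


lemma integral_pow_mul_log1 (m : ℕ) :
    ∫ x in (0:ℝ)..1, x ^ m * Real.log x = -(1 / ((m:ℝ) + 1) ^ 2) := by
  have hm : ((m:ℝ) + 1) ≠ 0 := by positivity
  set F : ℝ → ℝ := fun x => x ^ (m+1) * Real.log x / (m+1) - x ^ (m+1) / ((m:ℝ)+1) ^ 2 with hF
  have hcont : ContinuousOn F (Set.Icc 0 1) := by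
    have hFeq : F = fun x => x ^ m * (x * Real.log x) / (m+1) - x ^ (m+1) / ((m:ℝ)+1) ^ 2 := by
      funext x; simp only [hF]; ring
    rw [hFeq]
    exact (((continuous_pow m).mul Real.continuous_mul_log).div_const _).sub
      ((continuous_pow (m+1)).div_const _) |>.continuousOn
  have hderiv : ∀ x ∈ Set.Ioo (0:ℝ) 1, HasDerivWithinAt F (x ^ m * Real.log x) (Set.Ioi x) x := by
    intro x hx
    have hx0 : x ≠ 0 := ne_of_gt hx.1
    have h1 : HasDerivAt (fun y : ℝ => y ^ (m+1)) (((m:ℝ)+1) * x ^ m) x := by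
      simpa using hasDerivAt_pow (m+1) x
    have h2 : HasDerivAt Real.log x⁻¹ x := Real.hasDerivAt_log hx0
    have h3 : HasDerivAt F ((((m:ℝ)+1) * x ^ m * Real.log x + x ^ (m+1) * x⁻¹) / (m+1)
        - ((m:ℝ)+1) * x ^ m / ((m:ℝ)+1) ^ 2) x := ((h1.mul h2).div_const _).sub (h1.div_const _)
    have : (((m:ℝ)+1) * x ^ m * Real.log x + x ^ (m+1) * x⁻¹) / (m+1)
        - ((m:ℝ)+1) * x ^ m / ((m:ℝ)+1) ^ 2 = x ^ m * Real.log x := by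
      field_simp; ring
    rw [this] at h3
    exact h3.hasDerivWithinAt
  have := intervalIntegral.integral_eq_sub_of_hasDeriv_right_of_le zero_le_one hcont hderiv
    (by simpa using ii_pow_mul_log m 1 (by norm_num))
  rw [this]
  simp only [hF, one_pow, Real.log_one, Real.log_zero]
  norm_num

lemma integral_pow_mul_log2 (m : ℕ) :
    ∫ x in (0:ℝ)..1, x ^ m * Real.log x ^ 2 = 2 / ((m:ℝ) + 1) ^ 3 := by
  have hm : ((m:ℝ) + 1) ≠ 0 := by positivity
  set F : ℝ → ℝ := fun x => x ^ (m+1) * Real.log x ^ 2 / (m+1)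
      - 2 * (x ^ (m+1) * Real.log x) / ((m:ℝ)+1) ^ 2 + 2 * x ^ (m+1) / ((m:ℝ)+1) ^ 3 with hF
  have hcont : ContinuousOn F (Set.Icc 0 1) := by
    have hFeq : ∀ x ∈ Set.Icc (0:ℝ) 1, (fun x => x ^ m * (2 * (Real.sqrt x * Real.log (Real.sqrt x))) ^ 2 / (m+1)
        - 2 * (x ^ m * (x * Real.log x)) / ((m:ℝ)+1) ^ 2 + 2 * x ^ (m+1) / ((m:ℝ)+1) ^ 3) x = F x := by
      intro x hx
      have hx0 : (0:ℝ) ≤ x := hx.1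
      have hs : Real.log (Real.sqrt x) = Real.log x / 2 := Real.log_sqrt hx0
      have hsq : Real.sqrt x ^ 2 = x := Real.sq_sqrt hx0
      simp only [hF, hs]
      have : (2 * (Real.sqrt x * (Real.log x / 2))) ^ 2 = Real.sqrt x ^ 2 * Real.log x ^ 2 := by ring
      rw [this, hsq]; ring
    refine ContinuousOn.congr ?_ fun x hx => (hFeq x hx).symm
    refine ContinuousOn.add (ContinuousOn.sub ?_ ?_) ?_
    · exact (((continuous_pow m).mul ((continuous_const.mul
        (Real.continuous_mul_log.comp Real.continuous_sqrt)).pow 2)).div_const _).continuousOn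
    · exact ((continuous_const.mul ((continuous_pow m).mul Real.continuous_mul_log)).div_const _).continuousOn
    · exact ((continuous_const.mul (continuous_pow (m+1))).div_const _).continuousOn
  have hderiv : ∀ x ∈ Set.Ioo (0:ℝ) 1, HasDerivWithinAt F (x ^ m * Real.log x ^ 2) (Set.Ioi x) x := by
    intro x hx
    have hx0 : x ≠ 0 := ne_of_gt hx.1
    have h1 : HasDerivAt (fun y : ℝ => y ^ (m+1)) (((m:ℝ)+1) * x ^ m) x := by
      simpa using hasDerivAt_pow (m+1) x
    have h2 : HasDerivAt Real.log x⁻¹ x := Real.hasDerivAt_log hx0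
    have h2' : HasDerivAt (fun y => Real.log y ^ 2) (2 * Real.log x ^ 1 * x⁻¹) x := by
      simpa using (h2.fun_pow 2)
    have h3 : HasDerivAt F ((((m:ℝ)+1) * x ^ m * Real.log x ^ 2 + x ^ (m+1) * (2 * Real.log x ^ 1 * x⁻¹)) / (m+1)
        - 2 * (((m:ℝ)+1) * x ^ m * Real.log x + x ^ (m+1) * x⁻¹) / ((m:ℝ)+1) ^ 2
        + 2 * (((m:ℝ)+1) * x ^ m) / ((m:ℝ)+1) ^ 3) x :=
      (((h1.mul h2').div_const _).sub (((h1.mul h2).const_mul 2).div_const _)).add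
        ((h1.const_mul 2).div_const _)
    have : (((m:ℝ)+1) * x ^ m * Real.log x ^ 2 + x ^ (m+1) * (2 * Real.log x ^ 1 * x⁻¹)) / (m+1)
        - 2 * (((m:ℝ)+1) * x ^ m * Real.log x + x ^ (m+1) * x⁻¹) / ((m:ℝ)+1) ^ 2
        + 2 * (((m:ℝ)+1) * x ^ m) / ((m:ℝ)+1) ^ 3 = x ^ m * Real.log x ^ 2 := by
      field_simp; ring
    rw [this] at h3
    exact h3.hasDerivWithinAt
  have := intervalIntegral.integral_eq_sub_of_hasDeriv_right_of_le zero_le_one hcont hderiv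
    (ii_pow_mul_log m 2 (by norm_num))
  rw [this]
  simp only [hF, one_pow, Real.log_one, Real.log_zero]
  norm_num


lemma Tfac_ne (a b : ℕ) : Tfac a b ≠ 0 := by
  unfold Tfac
  positivity

lemma Tfac_succ_left (a b : ℕ) : Tfac (a+1) b = Tfac a b * ((a:ℝ)+1) / ((a:ℝ)+(b:ℝ)+2) := by
  unfold Tfac
  have h1 : (a+1) + b + 1 = (a+b+1) + 1 := by omega
  rw [h1, Nat.factorial_succ, Nat.factorial_succ]
  have h2 : ((a+b+1).factorial : ℝ) ≠ 0 := by positivity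
  push_cast
  field_simp
  ring
lemma Tfac_succ_right (a b : ℕ) : Tfac a (b+1) = Tfac a b * ((b:ℝ)+1) / ((a:ℝ)+(b:ℝ)+2) := by
  unfold Tfac
  have h1 : a + (b+1) + 1 = (a+b+1) + 1 := by omega
  rw [h1, Nat.factorial_succ, Nat.factorial_succ]
  have h2 : ((a+b+1).factorial : ℝ) ≠ 0 := by positivity
  push_cast
  field_simp
  ring

lemma harmonicR_succ (m : ℕ) : harmonicR (m+1) = harmonicR m + 1 / ((m:ℝ)+1) := by
  unfold harmonicR; rw [Finset.sum_range_succ]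

lemma Gsum_succ_left (a b : ℕ) : Gsum (a+1) b = Gsum a b + 1 / ((a:ℝ)+(b:ℝ)+2) ^ 2 := by
  unfold Gsum; rw [Finset.sum_range_succ]; congr 1; push_cast; ring

lemma Gsum_shift (a b : ℕ) : Gsum a (b+1) = Gsum (a+1) b - 1 / ((b:ℝ)+1) ^ 2 := by
  have : Gsum (a+1) b = Gsum a (b+1) + 1 / ((b:ℝ)+1) ^ 2 := by
    unfold Gsum
    rw [Finset.sum_range_succ' (fun k => (1:ℝ) / ((b:ℝ) + 1 + k) ^ 2) (a+1)]
    refine congrArg₂ (· + ·) (Finset.sum_congr rfl fun k _ => ?_) (by norm_num)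
    push_cast; ring_nf
  rw [this]; ring

lemma pascal_sum (φ : ℕ → ℝ) (a b : ℕ) :
    ∑ j ∈ Finset.range (a+2), (-1:ℝ)^j * ((a+1).choose j) * φ (b+j)
      = (∑ j ∈ Finset.range (a+1), (-1:ℝ)^j * (a.choose j) * φ (b+j))
        - ∑ j ∈ Finset.range (a+1), (-1:ℝ)^j * (a.choose j) * φ (b+1+j) := by
  rw [Finset.sum_range_succ' (fun j => (-1:ℝ)^j * ((a+1).choose j) * φ (b+j)) (a+1),
      Finset.sum_range_succ' (fun j => (-1:ℝ)^j * ((a).choose j) * φ (b+j)) a]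
  have key : ∀ i ∈ Finset.range (a+1),
      (-1:ℝ)^(i+1) * ((a+1).choose (i+1)) * φ (b+(i+1))
      = (-1:ℝ)^(i+1) * ((a).choose (i+1)) * φ (b+(i+1))
        - (-1:ℝ)^i * ((a).choose i) * φ (b+1+i) := by
    intro i _
    have h1 : b + (i+1) = b + 1 + i := by omega
    rw [Nat.choose_succ_succ, h1]
    push_cast
    ring
  rw [Finset.sum_congr rfl key, Finset.sum_sub_distrib]
  have h2 : ∑ i ∈ Finset.range (a+1), (-1:ℝ)^(i+1) * ((a).choose (i+1)) * φ (b+(i+1))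
      = ∑ i ∈ Finset.range a, (-1:ℝ)^(i+1) * ((a).choose (i+1)) * φ (b+(i+1)) := by
    rw [Finset.sum_range_succ, Nat.choose_succ_self]
    simp
  rw [h2]
  simp only [pow_zero, Nat.choose_zero_right, Nat.cast_one, one_mul, mul_one, Nat.add_zero]
  ring

lemma Tfac_zero (b : ℕ) : Tfac 0 b = 1 / ((b:ℝ)+1) := by
  unfold Tfac
  rw [Nat.zero_add, Nat.factorial_succ]
  have : (b.factorial : ℝ) ≠ 0 := by positivity
  push_cast
  field_simp
  ring

lemma sumS1 (a b : ℕ) :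
    ∑ j ∈ Finset.range (a+1), (-1:ℝ)^j * (a.choose j) * (1/(((b+j : ℕ):ℝ)+1)) = Tfac a b := by
  induction a generalizing b with
  | zero => simp [Tfac_zero]
  | succ a ih =>
    rw [show a+1+1 = a+2 from rfl,
      pascal_sum (fun m => 1/((m:ℝ)+1)) a b, ih b, ih (b+1),
      Tfac_succ_left, Tfac_succ_right]
    have h1 : ((a:ℝ)+(b:ℝ)+2) ≠ 0 := by positivity
    field_simp
    ring

lemma sumS2 (a b : ℕ) :
    ∑ j ∈ Finset.range (a+1), (-1:ℝ)^j * (a.choose j) * (1/(((b+j : ℕ):ℝ)+1)^2)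
      = Tfac a b * (harmonicR (a+b+1) - harmonicR b) := by
  induction a generalizing b with
  | zero =>
    have h2 : ((b:ℝ)+1) ≠ 0 := by positivity
    simp [Tfac_zero, harmonicR_succ]
    field_simp
  | succ a ih =>
    rw [show a+1+1 = a+2 from rfl,
      pascal_sum (fun m => 1/((m:ℝ)+1)^2) a b, ih b, ih (b+1),
      Tfac_succ_left, Tfac_succ_right,
      show a+(b+1)+1 = (a+b+1)+1 from by omega,
      show (a+1)+b+1 = (a+b+1)+1 from by omega,
      harmonicR_succ (a+b+1), harmonicR_succ b]
    have h1 : ((a:ℝ)+(b:ℝ)+2) ≠ 0 := by positivity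
    have h2 : ((b:ℝ)+1) ≠ 0 := by positivity
    push_cast
    field_simp
    ring

lemma sumS3 (a b : ℕ) :
    ∑ j ∈ Finset.range (a+1), (-1:ℝ)^j * (a.choose j) * (1/(((b+j : ℕ):ℝ)+1)^3)
      = Tfac a b / 2 * ((harmonicR (a+b+1) - harmonicR b)^2 + Gsum a b) := by
  induction a generalizing b with
  | zero =>
    have hG : Gsum 0 b = 1 / ((b:ℝ)+1)^2 := by
      unfold Gsum; simp
    simp only [Nat.zero_add, harmonicR_succ b, hG]
    simp [Tfac_zero]
    have h2 : ((b:ℝ)+1) ≠ 0 := by positivity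
    field_simp
    ring
  | succ a ih =>
    rw [show a+1+1 = a+2 from rfl,
      pascal_sum (fun m => 1/((m:ℝ)+1)^3) a b, ih b, ih (b+1),
      Tfac_succ_left, Tfac_succ_right,
      show a+(b+1)+1 = (a+b+1)+1 from by omega,
      show (a+1)+b+1 = (a+b+1)+1 from by omega,
      harmonicR_succ (a+b+1), harmonicR_succ b,
      Gsum_shift, Gsum_succ_left]
    have h1 : ((a:ℝ)+(b:ℝ)+2) ≠ 0 := by positivity
    have h2 : ((b:ℝ)+1) ≠ 0 := by positivity
    push_cast
    field_simp
    ring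


lemma pt_expand (a b k : ℕ) (x : ℝ) :
    x ^ b * (1-x) ^ a * Real.log x ^ k
      = ∑ j ∈ Finset.range (a+1), (-1:ℝ)^j * (a.choose j) * (x ^ (b+j) * Real.log x ^ k) := by
  have h : (1-x) ^ a = ∑ j ∈ Finset.range (a+1), (-x)^j * 1^(a-j) * (a.choose j : ℝ) := by
    rw [show (1-x : ℝ) = (-x) + 1 by ring, add_pow]
  rw [h, Finset.mul_sum, Finset.sum_mul]
  refine Finset.sum_congr rfl fun j _ => ?_
  rw [one_pow, mul_one, neg_pow, pow_add]
  ring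

lemma ii_J (a b k : ℕ) (hk : k ≤ 2) :
    IntervalIntegrable (fun x => x ^ b * (1-x) ^ a * Real.log x ^ k) volume 0 1 := by
  have h : (fun x : ℝ => x ^ b * (1-x) ^ a * Real.log x ^ k)
      = fun x => ∑ j ∈ Finset.range (a+1), (-1:ℝ)^j * (a.choose j) * (x ^ (b+j) * Real.log x ^ k) :=
    funext (pt_expand a b k)
  rw [h]
  have hs := IntervalIntegrable.sum
    (f := fun j x => (-1:ℝ)^j * (a.choose j : ℝ) * (x ^ (b+j) * Real.log x ^ k))
    (μ := volume) (a := 0) (b := 1)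
    (Finset.range (a+1)) (fun j _ => (ii_pow_mul_log (b+j) k hk).const_mul _)
  have he : (∑ j ∈ Finset.range (a+1), fun x : ℝ => (-1:ℝ)^j * (a.choose j : ℝ) * (x ^ (b+j) * Real.log x ^ k))
      = fun x => ∑ j ∈ Finset.range (a+1), (-1:ℝ)^j * (a.choose j : ℝ) * (x ^ (b+j) * Real.log x ^ k) := by
    funext x
    exact Finset.sum_apply x _ _
  rwa [he] at hs

lemma J0 (a b : ℕ) : ∫ x in (0:ℝ)..1, x ^ b * (1-x) ^ a = Tfac a b := by
  have h : (fun x : ℝ => x ^ b * (1-x) ^ a)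
      = fun x => ∑ j ∈ Finset.range (a+1), (-1:ℝ)^j * (a.choose j) * (x ^ (b+j) * Real.log x ^ 0) := by
    funext x
    rw [← pt_expand a b 0 x, pow_zero, mul_one]
  rw [h, intervalIntegral.integral_finset_sum
    (fun j _ => (ii_pow_mul_log (b+j) 0 (by norm_num)).const_mul _)]
  rw [← sumS1 a b]
  refine Finset.sum_congr rfl fun j _ => ?_
  rw [intervalIntegral.integral_const_mul]
  congr 1
  simp only [pow_zero, mul_one]
  rw [integral_pow]
  norm_num

lemma J1 (a b : ℕ) : ∫ x in (0:ℝ)..1, x ^ b * (1-x) ^ a * Real.log x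
      = -(Tfac a b * (harmonicR (a+b+1) - harmonicR b)) := by
  have h : (fun x : ℝ => x ^ b * (1-x) ^ a * Real.log x)
      = fun x => ∑ j ∈ Finset.range (a+1), (-1:ℝ)^j * (a.choose j) * (x ^ (b+j) * Real.log x ^ 1) := by
    funext x
    rw [← pt_expand a b 1, pow_one]
  rw [h, intervalIntegral.integral_finset_sum
    (fun j _ => (ii_pow_mul_log (b+j) 1 (by norm_num)).const_mul _)]
  rw [← sumS2 a b, ← Finset.sum_neg_distrib]
  refine Finset.sum_congr rfl fun j _ => ?_
  rw [intervalIntegral.integral_const_mul]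
  simp only [pow_one]
  rw [integral_pow_mul_log1]
  ring

lemma J2 (a b : ℕ) : ∫ x in (0:ℝ)..1, x ^ b * (1-x) ^ a * Real.log x ^ 2
      = Tfac a b * ((harmonicR (a+b+1) - harmonicR b)^2 + Gsum a b) := by
  have h : (fun x : ℝ => x ^ b * (1-x) ^ a * Real.log x ^ 2)
      = fun x => ∑ j ∈ Finset.range (a+1), (-1:ℝ)^j * (a.choose j) * (x ^ (b+j) * Real.log x ^ 2) :=
    funext (pt_expand a b 2)
  rw [h, intervalIntegral.integral_finset_sum
    (fun j _ => (ii_pow_mul_log (b+j) 2 (by norm_num)).const_mul _)]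
  have h2 : Tfac a b * ((harmonicR (a+b+1) - harmonicR b)^2 + Gsum a b)
      = 2 * (Tfac a b / 2 * ((harmonicR (a+b+1) - harmonicR b)^2 + Gsum a b)) := by ring
  rw [h2, ← sumS3 a b, Finset.mul_sum]
  refine Finset.sum_congr rfl fun j _ => ?_
  rw [intervalIntegral.integral_const_mul, integral_pow_mul_log2]
  ring

lemma refl_int (f : ℝ → ℝ) : ∫ x in (0:ℝ)..1, f (1-x) = ∫ x in (0:ℝ)..1, f x := by
  simpa using intervalIntegral.integral_comp_sub_left f 1

lemma ii_refl (a b k : ℕ) (hk : k ≤ 2) :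
    IntervalIntegrable (fun x => x ^ a * (1-x) ^ b * Real.log (1-x) ^ k) volume 0 1 := by
  have h1 := ((ii_J a b k hk).comp_sub_left 1).symm
  have h2 : (fun x : ℝ => (1-x) ^ b * (1-(1-x)) ^ a * Real.log (1-x) ^ k)
      = fun x => x ^ a * (1-x) ^ b * Real.log (1-x) ^ k := by
    funext x
    rw [show (1:ℝ)-(1-x) = x by ring]
    ring
  rw [h2] at h1
  simpa using h1

lemma M_refl (a b k : ℕ) :
    ∫ x in (0:ℝ)..1, x ^ a * (1-x) ^ b * Real.log (1-x) ^ k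
      = ∫ x in (0:ℝ)..1, x ^ b * (1-x) ^ a * Real.log x ^ k := by
  rw [← refl_int (fun u => u ^ b * (1-u) ^ a * Real.log u ^ k)]
  refine intervalIntegral.integral_congr fun x _ => ?_
  rw [show (1:ℝ)-(1-x) = x by ring]
  ring

lemma Tfac_comm (a b : ℕ) : Tfac a b = Tfac b a := by
  unfold Tfac
  rw [show b + a + 1 = a + b + 1 by omega]
  ring

/-- **MSE of α̂′.** The mean squared error of the alternative AURC weight
`α̂′ = −log(1 − r/(n+1))` under `β ∼ Beta(r, n+1−r)` equals
`∑_{k=n+1−r}^{n} 1/k² + (log(1 − r/(n+1)) + H_n − H_{n−r})²`. -/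
theorem mse_alpha_hat_prime (n r : ℕ) (hn : 1 ≤ n) (hr1 : 1 ≤ r) (hrn : r ≤ n) :
    ∫ x in (0 : ℝ)..1,
        (-Real.log (1 - (r : ℝ) / (n + 1)) + Real.log (1 - x)) ^ 2 *
          (x ^ (r - 1) * (1 - x) ^ (n - r) / betaFn r (n + 1 - r))
      = (∑ k ∈ Finset.Icc (n + 1 - r) n, (1 : ℝ) / (k : ℝ) ^ 2)
        + (Real.log (1 - (r : ℝ) / (n + 1)) + (harmonicR n - harmonicR (n - r))) ^ 2 := by
  set A := r - 1 with hA
  set B := n - r with hB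
  have hAB1 : A + B + 1 = n := by omega
  have hbeta : betaFn r (n + 1 - r) = Tfac A B := by
    unfold betaFn
    rw [show n + 1 - r - 1 = B by omega, show r - 1 = A from rfl, J0 B A, Tfac_comm]
  have hM0 : ∫ x in (0:ℝ)..1, x ^ A * (1-x) ^ B = Tfac A B := by
    have h := M_refl A B 0
    simp only [pow_zero, mul_one] at h
    rw [h, J0 A B]
  have hM1 : ∫ x in (0:ℝ)..1, x ^ A * (1-x) ^ B * Real.log (1-x)
      = -(Tfac A B * (harmonicR n - harmonicR B)) := by
    have h := M_refl A B 1
    simp only [pow_one] at h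
    rw [h, J1 A B, show A + B + 1 = n by omega]
  have hM2 : ∫ x in (0:ℝ)..1, x ^ A * (1-x) ^ B * Real.log (1-x) ^ 2
      = Tfac A B * ((harmonicR n - harmonicR B)^2 + Gsum A B) := by
    rw [M_refl A B 2, J2 A B, show A + B + 1 = n by omega]
  have hIcc : (∑ k ∈ Finset.Icc (n + 1 - r) n, (1 : ℝ) / (k : ℝ) ^ 2) = Gsum A B := by
    rw [show n + 1 - r = B + 1 by omega, show n = A + B + 1 by omega,
      ← Finset.Ico_add_one_right_eq_Icc, Finset.sum_Ico_eq_sum_range,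
      show A + B + 1 + 1 - (B + 1) = A + 1 by omega]
    unfold Gsum
    refine Finset.sum_congr rfl fun k _ => ?_
    push_cast
    ring_nf
  set c := Real.log (1 - (r : ℝ) / (n + 1)) with hc
  have hTne : Tfac A B ≠ 0 := Tfac_ne A B
  have key : (fun x : ℝ => (-c + Real.log (1-x)) ^ 2 * (x ^ A * (1-x) ^ B / Tfac A B))
      = fun x : ℝ => (c^2 * (x ^ A * (1-x) ^ B)
          + ((-2*c) * (x ^ A * (1-x) ^ B * Real.log (1-x))
          + x ^ A * (1-x) ^ B * Real.log (1-x) ^ 2)) / Tfac A B := by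
    funext x
    field_simp
    ring
  have hii0 : IntervalIntegrable (fun x : ℝ => c^2 * (x ^ A * (1-x) ^ B)) volume 0 1 := by
    have := (ii_refl A B 0 (by norm_num)).const_mul (c^2)
    simpa using this
  have hii1 : IntervalIntegrable
      (fun x : ℝ => (-2*c) * (x ^ A * (1-x) ^ B * Real.log (1-x))) volume 0 1 := by
    have := (ii_refl A B 1 (by norm_num)).const_mul (-2*c)
    simpa using this
  have hii2 : IntervalIntegrable
      (fun x : ℝ => x ^ A * (1-x) ^ B * Real.log (1-x) ^ 2) volume 0 1 :=
    ii_refl A B 2 (by norm_num)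
  rw [hbeta, key, intervalIntegral.integral_div, intervalIntegral.integral_add hii0 (hii1.add hii2),
    intervalIntegral.integral_add hii1 hii2, intervalIntegral.integral_const_mul,
    intervalIntegral.integral_const_mul, hM0, hM1, hM2, hIcc]
  field_simp
  ring
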